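/- For every rational γ with 0 < γ < 1/30, there exist arbitrarily large n and an n-vertex undirected graph G with minimum degree at least (5/6 − γ)n, together with an orientation of G, such that any collection of vertex-disjoint transitive triangles TT_3 in this orientation has at most n/3 − γn members (equivalently, at least 3γn vertices are uncovered by any such collection). -/

import Mathlib

private def Tb6 : Fin 6 → Fin 6 → Bool := fun i j =>
  (decide (i.val < 4) && decide (j.val < 4) && decide (i.val < j.val)) ||
  (decide (i.val < 4) && decide (j.val = 4)) ||
  (decide (i.val = 5) && decide (j.val < 4)) ||
  (decide (i.val = 4) && decide (j.val = 5))

private lemma Tb6_irrefl : ∀ i, Tb6 i i = false := by decide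

private lemma Tb6_asymm : ∀ i j, ¬ (Tb6 i j = true ∧ Tb6 j i = true) := by decide

private lemma Tb6_total : ∀ i j, i ≠ j → (Tb6 i j = true ∨ Tb6 j i = true) := by decide

private lemma Tb6_key : ∀ i j k, Tb6 i j = true → Tb6 j k = true → Tb6 i k = true →
    (i.val < 4 ∧ j.val < 4) ∨ (i.val < 4 ∧ k.val < 4) ∨ (j.val < 4 ∧ k.val < 4) := by decide

private def pmap (a b n : ℕ) : Fin n → Fin 6 := fun v =>
  if v.val < a then ⟨0, by omega⟩ else if v.val < 2*a then ⟨1, by omega⟩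
  else if v.val < 3*a then ⟨2, by omega⟩ else if v.val < 4*a then ⟨3, by omega⟩
  else if v.val < 4*a + b then ⟨4, by omega⟩ else ⟨5, by omega⟩

private def lo6 (a b : ℕ) : Fin 6 → ℕ := fun j => if j.val = 5 then 4*a + b else j.val * a

private lemma pmap_interval (a b n : ℕ) (hab : a ≤ b) (hn : n = 4*a + 2*b) (v : Fin n) :
    lo6 a b (pmap a b n v) ≤ v.val ∧ v.val < lo6 a b (pmap a b n v) + b := by
  have hv := v.isLt
  unfold pmap
  split_ifs with h1 h2 h3 h4 h5 <;> simp [lo6] <;> omega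

private lemma pmap_lt4 (a b n : ℕ) (v : Fin n) :
    (pmap a b n v).val < 4 ↔ v.val < 4*a := by
  unfold pmap
  split_ifs with h1 h2 h3 h4 h5 <;> simp <;> omega

theorem stmt_7 (γ : ℚ) (h0 : 0 < γ) (h1 : γ < 1 / 30) (N : ℕ) :
    ∃ n : ℕ, N ≤ n ∧ ∃ D : Fin n → Fin n → Prop,
      (∀ v, ¬ D v v) ∧ (∀ u v, ¬ (D u v ∧ D v u)) ∧
      (∀ v : Fin n, ((5 : ℝ) / 6 - (γ : ℝ)) * n ≤ ({u | D v u ∨ D u v} : Set (Fin n)).ncard) ∧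
      ∀ (c : ℕ) (F : Fin c → Fin 3 → Fin n),
        Function.Injective (fun p : Fin c × Fin 3 => F p.1 p.2) →
        (∀ m, D (F m 0) (F m 1) ∧ D (F m 1) (F m 2) ∧ D (F m 0) (F m 2)) →
        (c : ℝ) ≤ (n : ℝ) / 3 - (γ : ℝ) * n := by
  classical
  set d : ℕ := γ.den with hd
  set e : ℕ := γ.num.toNat with he
  have hdpos : 0 < d := γ.pos
  have hnum : (γ.num : ℚ) = (e : ℚ) := by
    rw [he]
    exact_mod_cast (Int.toNat_of_nonneg (le_of_lt (Rat.num_pos.mpr h0))).symm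
  have hγ : γ = (e : ℚ) / d := by
    rw [← hnum, hd]
    exact (Rat.num_div_den γ).symm
  have hepos : 0 < e := by
    by_contra h
    have : e = 0 := by omega
    rw [hγ, this] at h0; simp at h0
  have h30 : 30 * e < d := by
    have h2 : (e : ℚ) / d < 1 / 30 := by rw [← hγ]; exact h1
    have h3 : (30 : ℚ) * e < d := by
      rw [div_lt_div_iff₀ (by exact_mod_cast hdpos) (by norm_num)] at h2
      linarith
    exact_mod_cast h3
  have h3e : 3 * e < d := by omega
  set t : ℕ := N + 1 with ht
  set a : ℕ := (d - 3*e) * t with ha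
  set b : ℕ := (d + 6*e) * t with hb
  set n : ℕ := 6 * d * t with hn
  have hab : a ≤ b := by
    apply Nat.mul_le_mul_right; omega
  have hsum : n = 4*a + 2*b := by
    rw [hn, ha, hb]
    have : 4 * ((d - 3*e) * t) = (4*d - 12*e) * t := by rw [← Nat.mul_assoc]; congr 1; omega
    rw [this]
    have : 2 * ((d + 6*e) * t) = (2*d + 12*e) * t := by rw [← Nat.mul_assoc]; congr 1; omega
    rw [this, ← Nat.add_mul]
    congr 1; omega
  refine ⟨n, ?_, ?_⟩
  · calc N ≤ t := by omega
      _ ≤ 6 * d * t := by nlinarith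
  set p : Fin n → Fin 6 := pmap a b n with hp
  refine ⟨fun u v => Tb6 (p u) (p v) = true, ?_, ?_, ?_, ?_⟩
  · intro v h
    rw [Tb6_irrefl] at h; exact Bool.false_ne_true h
  · intro u v ⟨h1', h2'⟩
    exact Tb6_asymm _ _ ⟨h1', h2'⟩
  · -- degree condition
    intro v
    have hset : ({u | Tb6 (p v) (p u) = true ∨ Tb6 (p u) (p v) = true} : Set (Fin n)) =
        {u | p u ≠ p v} := by
      ext u
      simp only [Set.mem_setOf_eq]
      constructor
      · intro hor heq
        rw [heq] at hor
        rcases hor with h | h <;> rw [Tb6_irrefl] at h <;> exact Bool.false_ne_true h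
      · intro h
        rcases Tb6_total (p v) (p u) (fun hh => h hh.symm) with h' | h'
        · exact Or.inl h'
        · exact Or.inr h'
    rw [hset]
    -- the "same part" set has at most b elements
    have hcard : ({u : Fin n | p u = p v} : Set (Fin n)).ncard ≤ b := by
      rw [Set.ncard_eq_toFinset_card']
      have hle := Finset.card_le_card_of_injOn
        (s := ({u : Fin n | p u = p v} : Set (Fin n)).toFinset)
        (t := Finset.range b) (fun u : Fin n => u.val - lo6 a b (p v)) ?_ ?_
      · simpa using hle
      · intro u hu
        rw [Finset.mem_coe, Set.mem_toFinset, Set.mem_setOf_eq] at hu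
        have h2 := pmap_interval a b n hab hsum u
        rw [← hp] at h2
        rw [hu] at h2
        simp only [Finset.mem_coe, Finset.mem_range]
        omega
      · intro u hu w hw huw
        simp only [Finset.mem_coe, Set.mem_toFinset, Set.mem_setOf_eq] at hu hw
        have h2 := pmap_interval a b n hab hsum u
        have h3 := pmap_interval a b n hab hsum w
        rw [← hp] at h2 h3
        rw [hu] at h2; rw [hw] at h3
        simp only at huw
        exact Fin.ext (by omega)
    have hge : n ≤ ({u : Fin n | p u ≠ p v} : Set (Fin n)).ncard + b := by
      have huniv : (Set.univ : Set (Fin n)) =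
          {u | p u ≠ p v} ∪ {u | p u = p v} := by
        ext u; simp [em']
      have h8 : (Set.univ : Set (Fin n)).ncard ≤
          ({u : Fin n | p u ≠ p v}).ncard + b := by
        rw [huniv]
        have h9 := Set.ncard_union_le ({u : Fin n | p u ≠ p v}) ({u : Fin n | p u = p v})
        omega
      rw [Set.ncard_univ, Nat.card_eq_fintype_card, Fintype.card_fin] at h8
      exact h8
    -- now the real arithmetic
    have hdR : ((d : ℝ)) ≠ 0 := by exact_mod_cast hdpos.ne'
    have hγcast : (γ : ℝ) = (e : ℝ) / (d : ℝ) := by rw [hγ]; push_cast; ring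
    have hnb : ((n : ℝ) - b) ≤ (({u : Fin n | p u ≠ p v} : Set (Fin n)).ncard : ℝ) := by
      have : (n : ℝ) ≤ (({u : Fin n | p u ≠ p v} : Set (Fin n)).ncard : ℝ) + b := by
        exact_mod_cast hge
      linarith
    have key2 : ((5 : ℝ)/6 - (γ : ℝ)) * n = (n : ℝ) - b := by
      rw [hγcast, hn, hb]
      push_cast
      field_simp
      ring
    rw [key2]
    exact hnb
  · -- triangle packing bound
    intro c F hinj hTT
    set P : Finset (Fin c × Fin 3) :=
      Finset.univ.filter (fun q => (p (F q.1 q.2)).val < 4) with hP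
    have hP2 : 2 * c ≤ P.card := by
      have hfib : P.card = ∑ m : Fin c,
          (P.filter (fun q => q.1 = m)).card :=
        Finset.card_eq_sum_card_fiberwise (fun q _ => Finset.mem_univ q.1)
      rw [hfib]
      have : ∀ m : Fin c, 2 ≤ (P.filter (fun q => q.1 = m)).card := by
        intro m
        obtain ⟨h01, h12, h02⟩ := hTT m
        have hk := Tb6_key _ _ _ h01 h12 h02
        have mem : ∀ i : Fin 3, (p (F m i)).val < 4 →
            (m, i) ∈ P.filter (fun q => q.1 = m) := by
          intro i hi
          simp [hP, hi]
        rcases hk with ⟨hx, hy⟩ | ⟨hx, hy⟩ | ⟨hx, hy⟩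
        · exact Finset.one_lt_card_iff.mpr
            ⟨(m, 0), (m, 1), mem 0 hx, mem 1 hy, by simp⟩
        · exact Finset.one_lt_card_iff.mpr
            ⟨(m, 0), (m, 2), mem 0 hx, mem 2 hy, by simp⟩
        · exact Finset.one_lt_card_iff.mpr
            ⟨(m, 1), (m, 2), mem 1 hx, mem 2 hy, by simp⟩
      calc 2 * c = ∑ _m : Fin c, 2 := by simp [Nat.mul_comm]
        _ ≤ ∑ m : Fin c, (P.filter (fun q => q.1 = m)).card :=
            Finset.sum_le_sum (fun m _ => this m)
    have hPA : P.card ≤ 4 * a := by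
      classical
      set Afin : Finset (Fin n) := Finset.univ.filter (fun v : Fin n => v.val < 4*a)
        with hA
      have step1 : P.card ≤ Afin.card := by
        refine Finset.card_le_card_of_injOn (fun q => F q.1 q.2) ?_ ?_
        · intro q hq
          simp only [Finset.mem_coe, hP, Finset.mem_filter] at hq
          rw [Finset.mem_coe, hA, Finset.mem_filter]
          refine ⟨Finset.mem_univ _, ?_⟩
          exact (pmap_lt4 a b n _).mp hq.2
        · intro q _ r _ hqr
          exact hinj hqr
      have step2 : Afin.card ≤ 4 * a := by
        have hle := Finset.card_le_card_of_injOn (s := Afin) (t := Finset.range (4*a))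
          (fun v : Fin n => v.val) ?_ ?_
        · simpa using hle
        · intro v hv
          simp only [Finset.mem_coe, hA, Finset.mem_filter] at hv
          exact Finset.mem_coe.mpr (Finset.mem_range.mpr hv.2)
        · intro v _ w _ h
          exact Fin.ext h
      omega
    have hc : c ≤ 2 * a := by omega
    have hdR : ((d : ℝ)) ≠ 0 := by exact_mod_cast hdpos.ne'
    have hγcast : (γ : ℝ) = (e : ℝ) / (d : ℝ) := by rw [hγ]; push_cast; ring
    have haR : (a : ℝ) = ((d : ℝ) - 3*e) * t := by
      rw [ha]
      push_cast [Nat.cast_sub (le_of_lt h3e)]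
      ring
    have hcR : (c : ℝ) ≤ 2 * ((d : ℝ) - 3*e) * t := by
      have h5 : (c : ℝ) ≤ 2 * (a : ℝ) := by exact_mod_cast hc
      rw [haR] at h5
      linarith
    have key : (n : ℝ) / 3 - (γ : ℝ) * n = 2 * ((d : ℝ) - 3*e) * t := by
      rw [hγcast, hn]
      push_cast
      field_simp
      ring
    rw [key]
    exact hcR
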